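/- Let α ⊨ n, let E be an equivalence class of SRCT(α) under ∼_α, let τ_sink be a sink tableau in E, and let M be the largest element of DRN(α,E). Then the distinguished removable node in column M of τ_sink contains the entry 1. -/

import Mathlib

/-- Cell `(r,c)` (0-indexed: row `r` from the top, column `c` from the left) of the
reverse composition diagram of the composition `α`. -/
def IsCell (α : List ℕ) (r c : ℕ) : Prop := r < α.length ∧ c < α.getD r 0

instance (α : List ℕ) (r c : ℕ) : Decidable (IsCell α r c) :=
  inferInstanceAs (Decidable (r < α.length ∧ c < α.getD r 0))

/-- A standard reverse composition tableau (SRCT) of shape `α`: a bijective filling of the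
reverse composition diagram of `α` by `{1,…,α.sum}` (with the junk value `0` off the diagram)
whose rows decrease from left to right, whose first column increases from top to bottom,
and which satisfies the triple rule. -/
structure SRCT (α : List ℕ) where
  entry : ℕ → ℕ → ℕ
  zero_off : ∀ r c, ¬ IsCell α r c → entry r c = 0
  one_le : ∀ r c, IsCell α r c → 1 ≤ entry r c
  le_sum : ∀ r c, IsCell α r c → entry r c ≤ α.sum
  inj : ∀ r c r' c', IsCell α r c → IsCell α r' c' → entry r c = entry r' c' → r = r' ∧ c = c'
  surj : ∀ m, 1 ≤ m → m ≤ α.sum → ∃ r c, IsCell α r c ∧ entry r c = m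
  row_dec : ∀ r c, IsCell α r (c + 1) → entry r (c + 1) < entry r c
  col1_inc : ∀ r r', r < r' → IsCell α r 0 → IsCell α r' 0 → entry r 0 < entry r' 0
  triple : ∀ r r' c, r < r' → IsCell α r c → IsCell α r' (c + 1) →
    entry r' (c + 1) < entry r c → IsCell α r (c + 1) ∧ entry r' (c + 1) < entry r (c + 1)

/-- `i` is a descent of `T`: `i+1` appears weakly right of `i`. -/
def Descent (α : List ℕ) (T : SRCT α) (i : ℕ) : Prop :=
  ∃ r c r' c', IsCell α r c ∧ IsCell α r' c' ∧
    T.entry r c = i ∧ T.entry r' c' = i + 1 ∧ c ≤ c'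

/-- `i` and `i+1` are attacking in `T`: same column, or adjacent columns with `i+1`
strictly southeast of `i`. -/
def Attacking (α : List ℕ) (T : SRCT α) (i : ℕ) : Prop :=
  ∃ r c r' c', IsCell α r c ∧ IsCell α r' c' ∧
    T.entry r c = i ∧ T.entry r' c' = i + 1 ∧ (c' = c ∨ (c' = c + 1 ∧ r < r'))

/-- The entry function of the filling `s_i(T)` obtained from `T` by interchanging the
positions of the entries `i` and `i+1`. -/
def swapEntry (α : List ℕ) (T : SRCT α) (i : ℕ) : ℕ → ℕ → ℕ := fun r c =>
  if T.entry r c = i then i + 1 else if T.entry r c = i + 1 then i else T.entry r c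

def maxPart (α : List ℕ) : ℕ := α.foldr max 0

/-- The entries of column `c` of `T`, read from top to bottom. -/
def colList (α : List ℕ) (T : SRCT α) (c : ℕ) : List ℕ :=
  (List.range α.length).filterMap fun r => if IsCell α r c then some (T.entry r c) else none

/-- The column word of `T`: entries of each column read top to bottom, columns left to right,
viewed as a permutation of `{1,…,n}` in one-line notation. -/
def colWord (α : List ℕ) (T : SRCT α) : List ℕ :=
  (List.range (maxPart α)).flatMap fun c => colList α T c

/-- The inversion set of a one-line word: pairs of positions `p < q` with `w_p > w_q`. -/
def invFinset (w : List ℕ) : Finset (ℕ × ℕ) :=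
  (Finset.range w.length ×ˢ Finset.range w.length).filter fun pq =>
    pq.1 < pq.2 ∧ w.getD pq.2 0 < w.getD pq.1 0

/-- The number of inversions, i.e. the Coxeter length of the one-line word. -/
def invCount (w : List ℕ) : ℕ := (invFinset w).card

/-- The standardization of a word with distinct letters, with ranks `1,…,len`. -/
def stdWord (w : List ℕ) : List ℕ :=
  w.map fun x => (w.filter fun y => decide (y ≤ x)).length

/-- The standardized column word of `T`: concatenation over columns (left to right) of the
standardizations of the column reading words (top to bottom). -/
def stWord (α : List ℕ) (T : SRCT α) : List ℕ :=
  (List.range (maxPart α)).flatMap fun c => stdWord (colList α T c)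

/-- The equivalence class of `T0` under `∼_α` (equal standardized column words). -/
def stClass (α : List ℕ) (T0 : SRCT α) : Set (SRCT α) := {T | stWord α T = stWord α T0}

/-- `T` is a source tableau: for every non-descent `i ≠ n`, the entry `i+1` lies in the cell
immediately to the left of the cell containing `i`. -/
def IsSource (α : List ℕ) (T : SRCT α) : Prop :=
  ∀ i, 1 ≤ i → i < α.sum → ¬ Descent α T i →
    ∃ r c, IsCell α r (c + 1) ∧ T.entry r c = i + 1 ∧ T.entry r (c + 1) = i

/-- `T` is a sink tableau: every descent of `T` is an attacking descent. -/
def IsSink (α : List ℕ) (T : SRCT α) : Prop := ∀ i, Descent α T i → Attacking α T i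

/-- The cell `(r,c)` is a removable node of the diagram of `α` (0-indexed): it is the last
cell of row `r`, and either `r` is the top row or no earlier part equals `α_r - 1`
(with `α_r ≥ 2`). -/
def Removable (α : List ℕ) (r c : ℕ) : Prop :=
  IsCell α r c ∧ c + 1 = α.getD r 0 ∧
    (r = 0 ∨ (2 ≤ α.getD r 0 ∧ ∀ i < r, α.getD i 0 ≠ α.getD r 0 - 1))

/-- The cell `(r,c)` of `T` contains the smallest entry in its column. -/
def MinInCol (α : List ℕ) (T : SRCT α) (r c : ℕ) : Prop :=
  ∀ r', IsCell α r' c → T.entry r c ≤ T.entry r' c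

/-- The set of columns containing a distinguished removable node (a removable node holding
the smallest entry of its column); this depends only on the `∼_α`-class of `T`. -/
def DRN (α : List ℕ) (T : SRCT α) : Set ℕ :=
  {c | ∃ r, Removable α r c ∧ MinInCol α T r c}


section Helpers

lemma myFilterMap_if {β : Type*} (p : ℕ → Prop) [DecidablePred p] (f : ℕ → β) (l : List ℕ) :
    (l.filterMap fun r => if p r then some (f r) else none)
      = (l.filter fun r => decide (p r)).map f := by
  induction l with
  | nil => rfl
  | cons a t ih => by_cases h : p a <;> simp [h, ih]

lemma myFlatMap_components {β γ : Type*} (l : List β) (g g' : β → List γ)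
    (hlen : ∀ b ∈ l, (g b).length = (g' b).length)
    (h : l.flatMap g = l.flatMap g') : ∀ b ∈ l, g b = g' b := by
  induction l with
  | nil => simp
  | cons a t ih =>
    simp only [List.flatMap_cons] at h
    obtain ⟨h1, h2⟩ := List.append_inj h (hlen a (by simp))
    intro b hb
    rcases List.mem_cons.1 hb with rfl | hb
    · exact h1
    · exact ih (fun b hb => hlen b (by simp [hb])) h2 b hb

lemma le_maxPart {α : List ℕ} {a : ℕ} (h : a ∈ α) : a ≤ maxPart α := by
  induction α with
  | nil => simp at h
  | cons b t ih =>
    rcases List.mem_cons.1 h with rfl | h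
    · simp only [maxPart, List.foldr_cons]; exact le_max_left _ _
    · refine le_trans (ih h) ?_
      simp only [maxPart, List.foldr_cons]; exact le_max_right _ _

def rowsCol (α : List ℕ) (c : ℕ) : List ℕ :=
  (List.range α.length).filter fun r => decide (IsCell α r c)

lemma mem_rowsCol {α : List ℕ} {c r : ℕ} : r ∈ rowsCol α c ↔ IsCell α r c := by
  constructor
  · intro h; exact of_decide_eq_true (List.mem_filter.1 h).2
  · intro h; exact List.mem_filter.2 ⟨List.mem_range.2 h.1, decide_eq_true h⟩

lemma nodup_rowsCol (α : List ℕ) (c : ℕ) : (rowsCol α c).Nodup :=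
  List.nodup_range.filter _

lemma colList_eq (α : List ℕ) (T : SRCT α) (c : ℕ) :
    colList α T c = (rowsCol α c).map (fun r => T.entry r c) :=
  myFilterMap_if _ _ _

lemma colList_nodup (α : List ℕ) (T : SRCT α) (c : ℕ) : (colList α T c).Nodup := by
  rw [colList_eq]
  exact (nodup_rowsCol α c).map_on (fun x hx y hy hxy =>
    (T.inj _ _ _ _ (mem_rowsCol.1 hx) (mem_rowsCol.1 hy) hxy).1)

lemma stdWord_col_eq {α : List ℕ} {T T' : SRCT α} (h : stWord α T = stWord α T')
    {c : ℕ} (hc : c < maxPart α) :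
    stdWord (colList α T c) = stdWord (colList α T' c) := by
  refine myFlatMap_components (List.range (maxPart α)) _ _ ?_ h c (List.mem_range.2 hc)
  intro b _
  simp [stdWord, colList_eq]

lemma std_one_iff (w : List ℕ) (hw : w.Nodup) (i : ℕ) (hi : i < w.length) :
    (w.filter fun y => decide (y ≤ w[i])).length = 1 ↔ ∀ x ∈ w, w[i] ≤ x := by
  constructor
  · intro h x hx
    by_contra hlt
    push_neg at hlt
    have hxm : x ∈ w.filter fun y => decide (y ≤ w[i]) :=
      List.mem_filter.2 ⟨hx, decide_eq_true (le_of_lt hlt)⟩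
    have hwm : w[i] ∈ w.filter fun y => decide (y ≤ w[i]) :=
      List.mem_filter.2 ⟨List.getElem_mem hi, decide_eq_true le_rfl⟩
    have hne : x ≠ w[i] := ne_of_lt hlt
    have hsub : ({x, w[i]} : Finset ℕ) ⊆ (w.filter fun y => decide (y ≤ w[i])).toFinset := by
      intro y hy
      rcases Finset.mem_insert.1 hy with rfl | hy
      · exact List.mem_toFinset.2 hxm
      · rw [Finset.mem_singleton.1 hy]; exact List.mem_toFinset.2 hwm
    have h2 : 2 ≤ (w.filter fun y => decide (y ≤ w[i])).length := by
      calc 2 = ({x, w[i]} : Finset ℕ).card := (Finset.card_pair hne).symm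
        _ ≤ (w.filter fun y => decide (y ≤ w[i])).toFinset.card := Finset.card_le_card hsub
        _ ≤ (w.filter fun y => decide (y ≤ w[i])).length := List.toFinset_card_le _
    omega
  · intro h
    have heq : (w.filter fun y => decide (y ≤ w[i])) = w.filter fun y => y == w[i] := by
      apply List.filter_congr
      intro x hx
      have := h x hx
      by_cases hxe : x = w[i]
      · simp [hxe]
      · have hnle : ¬ x ≤ w[i] := by omega
        simp [hxe, hnle]
    rw [heq]
    have : (w.filter fun y => y == w[i]).length = w.count w[i] := by
      simp [List.count_eq_countP, List.countP_eq_length_filter]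
    rw [this]
    exact List.count_eq_one_of_mem hw (List.getElem_mem hi)

lemma minInCol_transfer {α : List ℕ} (T T' : SRCT α) (h : stWord α T = stWord α T')
    {r c : ℕ} (hcell : IsCell α r c) (hmin : MinInCol α T r c) : MinInCol α T' r c := by
  have hgm : α.getD r 0 ∈ α := by
    rw [List.getD_eq_getElem α 0 hcell.1]
    exact List.getElem_mem hcell.1
  have hc : c < maxPart α := lt_of_lt_of_le hcell.2 (le_maxPart hgm)
  have hr : r ∈ rowsCol α c := mem_rowsCol.2 hcell
  set rows := rowsCol α c with hrows
  have hi : rows.idxOf r < rows.length := List.idxOf_lt_length_iff.2 hr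
  set i := rows.idxOf r with hidef
  have hri : rows[i] = r := List.getElem_idxOf hi
  have hlw : i < (colList α T c).length := by rw [colList_eq]; simpa using hi
  have hlw' : i < (colList α T' c).length := by rw [colList_eq]; simpa using hi
  have hwi : (colList α T c)[i] = T.entry r c := by
    rw [List.getElem_of_eq (colList_eq α T c) hlw, List.getElem_map]
    exact congrArg (fun x => T.entry x c) hri
  have hwi' : (colList α T' c)[i] = T'.entry r c := by
    rw [List.getElem_of_eq (colList_eq α T' c) hlw', List.getElem_map]
    exact congrArg (fun x => T'.entry x c) hri
  have hmem : ∀ x ∈ colList α T c, (colList α T c)[i] ≤ x := by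
    intro x hx
    rw [colList_eq] at hx
    obtain ⟨r'', hr'', rfl⟩ := List.mem_map.1 hx
    rw [hwi]
    exact hmin r'' (mem_rowsCol.1 hr'')
  have h1 : ((colList α T c).filter fun y => decide (y ≤ (colList α T c)[i])).length = 1 :=
    (std_one_iff _ (colList_nodup α T c) i hlw).2 hmem
  have hstd : stdWord (colList α T c) = stdWord (colList α T' c) := stdWord_col_eq h hc
  have hg1 : (stdWord (colList α T c))[i]'(by simpa [stdWord] using hlw) = 1 := by
    simpa [stdWord] using h1
  have hg2 : (stdWord (colList α T' c))[i]'(by simpa [stdWord] using hlw') = 1 := by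
    rw [← List.getElem_of_eq hstd]
    exact hg1
  have h1' : ((colList α T' c).filter fun y => decide (y ≤ (colList α T' c)[i])).length = 1 := by
    simpa [stdWord] using hg2
  have hmem' : ∀ x ∈ colList α T' c, (colList α T' c)[i] ≤ x :=
    (std_one_iff _ (colList_nodup α T' c) i hlw').1 h1'
  intro r'' hcell''
  have hx : T'.entry r'' c ∈ colList α T' c := by
    rw [colList_eq]
    exact List.mem_map.2 ⟨r'', mem_rowsCol.2 hcell'', rfl⟩
  have := hmem' _ hx
  rwa [hwi'] at this

lemma one_cell (α : List ℕ) (hpos : ∀ a ∈ α, 0 < a) (T : SRCT α) (hsum : 1 ≤ α.sum) :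
    ∃ r c, IsCell α r c ∧ T.entry r c = 1 ∧ Removable α r c ∧ MinInCol α T r c := by
  obtain ⟨r, c, hcell, hone⟩ := T.surj 1 le_rfl hsum
  refine ⟨r, c, hcell, hone, ?_, ?_⟩
  · -- Removable
    have hrlen := hcell.1
    have hc2 := hcell.2
    have hend : c + 1 = α.getD r 0 := by
      by_contra hne
      have hcell2 : IsCell α r (c + 1) := ⟨hcell.1, by omega⟩
      have := T.row_dec r c hcell2
      have := T.one_le r (c+1) hcell2
      omega
    refine ⟨hcell, hend, ?_⟩
    rcases Nat.eq_zero_or_pos c with rfl | hcpos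
    · -- c = 0 : show r = 0
      left
      by_contra hr0
      have h00 : IsCell α 0 0 := by
        refine ⟨by omega, ?_⟩
        have := hpos (α.getD 0 0) (by
          rw [List.getD_eq_getElem α 0 (by omega : 0 < α.length)]
          exact List.getElem_mem _)
        omega
      have := T.col1_inc 0 r (by omega) h00 hcell
      have := T.one_le 0 0 h00
      omega
    · rcases Nat.eq_zero_or_pos r with rfl | hrpos
      · exact Or.inl rfl
      right
      constructor
      · omega
      intro j hj hje
      -- α_j = α_r - 1 = c, use triple rule for contradiction
      have hje' : α.getD j 0 = c := by omega
      have hcellj : IsCell α j (c - 1) := ⟨by omega, by omega⟩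
      have hc1 : c - 1 + 1 = c := by omega
      have hcellr : IsCell α r (c - 1 + 1) := by rw [hc1]; exact hcell
      have hlt : T.entry r (c - 1 + 1) < T.entry j (c - 1) := by
        have h1 : 1 ≤ T.entry j (c-1) := T.one_le _ _ hcellj
        have hne1 : T.entry j (c-1) ≠ 1 := by
          intro he
          have := T.inj j (c-1) r c hcellj hcell (by rw [he, hone])
          omega
        rw [hc1, hone]
        omega
      have := (T.triple j r (c-1) (by omega) hcellj hcellr hlt).1
      rw [hc1] at this
      have := this.2
      omega
  · -- MinInCol
    intro r' hc'
    rw [hone]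
    exact T.one_le _ _ hc'

lemma chain_lemma (α : List ℕ) (T : SRCT α) (hsink : IsSink α T)
    (r' c' : ℕ) (hrem : Removable α r' c') (hmin : MinInCol α T r' c') :
    ∀ d r c, IsCell α r c → T.entry r c + d = T.entry r' c' → c' ≤ c := by
  intro d
  induction d with
  | zero =>
    intro r c hcell hd
    have := T.inj r c r' c' hcell hrem.1 (by omega)
    omega
  | succ d ih =>
    intro r c hcell hd
    set j := T.entry r c with hjdef
    have hj1 : 1 ≤ j := T.one_le _ _ hcell
    have hjsum : j + 1 ≤ α.sum := le_trans (by omega) (T.le_sum _ _ hrem.1)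
    obtain ⟨r'', c'', hcell'', he''⟩ := T.surj (j+1) (by omega) hjsum
    have hc'' : c' ≤ c'' := ih r'' c'' hcell'' (by omega)
    by_contra hcc
    push_neg at hcc
    have hdes : Descent α T j := ⟨r, c, r'', c'', hcell, hcell'', rfl, he'', by omega⟩
    obtain ⟨a, b, a', b', hca, hca', hea, hea', hor⟩ := hsink j hdes
    obtain ⟨ha, hb⟩ := T.inj a b r c hca hcell (by rw [hea])
    obtain ⟨ha', hb'⟩ := T.inj a' b' r'' c'' hca' hcell'' (by rw [hea', he''])
    rcases hor with heqc | ⟨heqc, hltr0⟩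
    · omega
    · -- c'' = c + 1, r < r'' ; hence c'' = c'
      have hltr : r < r'' := by omega
      have heqc2 : c'' = c + 1 := by omega
      have hceq : c'' = c' := by omega
      -- minimality forces j + 1 = entry at (r', c') and r'' = r'
      have hmin' : T.entry r' c' ≤ j + 1 := by
        have h1 := hmin r'' (by rwa [hceq] at hcell'')
        rw [← he'', hceq]
        exact h1
      have hm : T.entry r' c' = j + 1 := by omega
      have hrr : r'' = r' := by
        have := T.inj r'' c'' r' c' hcell'' hrem.1 (by rw [he'', hm])
        exact this.1
      -- removability: r' ≠ 0, so no earlier row has length c'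
      have hltrr : r < r' := by omega
      have hr'pos : r' ≠ 0 := by omega
      rcases hrem.2.2 with h0 | ⟨h2, hno⟩
      · exact hr'pos h0
      have hαr' : α.getD r' 0 = c' + 1 := hrem.2.1.symm
      have hne : α.getD r 0 ≠ c' := by
        have := hno r (by omega)
        omega
      -- row r has a cell in column c' (since α_r ≥ c'+1)
      have hcellrc' : IsCell α r c' := by
        refine ⟨hcell.1, ?_⟩
        have : c < α.getD r 0 := hcell.2
        omega
      have hcprev : c + 1 = c' := by omega
      have hdec : T.entry r (c+1) < T.entry r c := T.row_dec r c (by rwa [hcprev])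
      have hminrc' : T.entry r' c' ≤ T.entry r c' := hmin r hcellrc'
      rw [hcprev] at hdec
      omega

end Helpers

/-- In a sink tableau of an equivalence class `E`, the distinguished removable node in the
largest column of `DRN(α,E)` contains the entry `1`. -/
theorem sink_one_in_greatest_DRN_column (n : ℕ) (α : List ℕ) (hpos : ∀ a ∈ α, 0 < a)
    (hsum : α.sum = n) (T Tsink : SRCT α) (hcl : Tsink ∈ stClass α T)
    (hsink : IsSink α Tsink) (M : ℕ) (hM : IsGreatest (DRN α T) M) :
    ∃ r, Removable α r M ∧ MinInCol α Tsink r M ∧ Tsink.entry r M = 1 := by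
  -- unpack the removable node of T in column M
  obtain ⟨r', hrem, hminT⟩ := hM.1
  have hst : stWord α Tsink = stWord α T := hcl
  have hminS : MinInCol α Tsink r' M := minInCol_transfer T Tsink hst.symm hrem.1 hminT
  -- the sum is at least 1
  have hsum1 : 1 ≤ α.sum := by
    have hg : α.getD r' 0 ∈ α := by
      rw [List.getD_eq_getElem α 0 hrem.1.1]
      exact List.getElem_mem _
    have h1 : α.getD r' 0 ≤ α.sum := List.single_le_sum (fun _ _ => Nat.zero_le _) _ hg
    have := hrem.1.2
    omega
  -- locate the entry 1 in Tsink
  obtain ⟨r1, c1, hcell1, hone1, hrem1, hmin1⟩ := one_cell α hpos Tsink hsum1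
  -- chain: c1 ≥ M
  have hm1 : 1 ≤ Tsink.entry r' M := Tsink.one_le _ _ hrem.1
  have hchain := chain_lemma α Tsink hsink r' M hrem hminS (Tsink.entry r' M - 1) r1 c1
    hcell1 (by omega)
  -- c1 ∈ DRN α T so c1 ≤ M
  have hminT1 : MinInCol α T r1 c1 := minInCol_transfer Tsink T hst hcell1 hmin1
  have hle : c1 ≤ M := hM.2 ⟨r1, hrem1, hminT1⟩
  have hceq : c1 = M := le_antisymm hle hchain
  subst hceq
  exact ⟨r1, hrem1, hmin1, hone1⟩
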